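/- arXiv:2111.06374 — 2 statements merged into one kernel-verified Lean document; each statement's English description precedes it below -/
import Mathlib

section
/- If X_1, X_2, ... are i.i.d. real random variables with mean x̄ and finite variance σ², then the standardized sums Y_N = Σ_{k=1}^N (X_k - x̄)/(σ√N) converge weakly (in distribution) to a standard normal random variable. -/
open MeasureTheory Filter

section CLTAux
open Complex

lemma clt_aux_integral_mul {Ω : Type*} [MeasurableSpace Ω] {μ : Measure Ω}
    {f g : Ω → ℂ} (h : ProbabilityTheory.IndepFun f g μ)
    (hf : Integrable f μ) (hg : Integrable g μ) :
    ∫ ω, f ω * g ω ∂μ = (∫ ω, f ω ∂μ) * ∫ ω, g ω ∂μ := by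
  have hfr : Integrable (fun ω => (f ω).re) μ := hf.re
  have hfi : Integrable (fun ω => (f ω).im) μ := hf.im
  have hgr : Integrable (fun ω => (g ω).re) μ := hg.re
  have hgi : Integrable (fun ω => (g ω).im) μ := hg.im
  have irr := (h.comp Complex.measurable_re Complex.measurable_re).integrable_mul hfr hgr
  have iri := (h.comp Complex.measurable_re Complex.measurable_im).integrable_mul hfr hgi
  have iir := (h.comp Complex.measurable_im Complex.measurable_re).integrable_mul hfi hgr
  have iii := (h.comp Complex.measurable_im Complex.measurable_im).integrable_mul hfi hgi
  have hrr := (h.comp Complex.measurable_re Complex.measurable_re).integral_mul_eq_mul_integral hfr.1 hgr.1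
  have hri := (h.comp Complex.measurable_re Complex.measurable_im).integral_mul_eq_mul_integral hfr.1 hgi.1
  have hir := (h.comp Complex.measurable_im Complex.measurable_re).integral_mul_eq_mul_integral hfi.1 hgr.1
  have hii := (h.comp Complex.measurable_im Complex.measurable_im).integral_mul_eq_mul_integral hfi.1 hgi.1
  simp only [Pi.mul_apply, Function.comp_apply] at hrr hri hir hii irr iri iir iii
  have hfg : Integrable (fun ω => f ω * g ω) μ := h.integrable_mul hf hg
  have Ire := integral_re hfg
  have Iim := integral_im hfg
  have Fre := integral_re hf
  have Fim := integral_im hf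
  have Gre := integral_re hg
  have Gim := integral_im hg
  simp only [RCLike.re_to_complex, RCLike.im_to_complex] at Ire Iim Fre Fim Gre Gim
  have irr' : Integrable (fun ω => (f ω).re * (g ω).re) μ := irr
  have iri' : Integrable (fun ω => (f ω).re * (g ω).im) μ := iri
  have iir' : Integrable (fun ω => (f ω).im * (g ω).re) μ := iir
  have iii' : Integrable (fun ω => (f ω).im * (g ω).im) μ := iii
  have hrr' : ∫ ω, (f ω).re * (g ω).re ∂μ = (∫ ω, (f ω).re ∂μ) * ∫ ω, (g ω).re ∂μ := hrr
  have hri' : ∫ ω, (f ω).re * (g ω).im ∂μ = (∫ ω, (f ω).re ∂μ) * ∫ ω, (g ω).im ∂μ := hri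
  have hir' : ∫ ω, (f ω).im * (g ω).re ∂μ = (∫ ω, (f ω).im ∂μ) * ∫ ω, (g ω).re ∂μ := hir
  have hii' : ∫ ω, (f ω).im * (g ω).im ∂μ = (∫ ω, (f ω).im ∂μ) * ∫ ω, (g ω).im ∂μ := hii
  refine Complex.ext ?_ ?_
  · rw [← Ire, Complex.mul_re, ← Fre, ← Fim, ← Gre, ← Gim]
    simp only [Complex.mul_re]
    rw [integral_sub irr' iii', hrr', hii']
  · rw [← Iim, Complex.mul_im, ← Fre, ← Fim, ← Gre, ← Gim]
    simp only [Complex.mul_im]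
    rw [integral_add iri' iir', hri', hir']

lemma clt_exp_norm (r : ℝ) : ‖Complex.exp (Complex.I * (r : ℂ))‖ = 1 := by
  simp [Complex.norm_exp]

lemma clt_exp_bound_cubic {x : ℝ} (hx : |x| ≤ 1) :
    ‖Complex.exp (Complex.I * (x : ℂ)) - 1 - Complex.I * (x : ℂ) + (x : ℂ) ^ 2 / 2‖
      ≤ |x| ^ 3 := by
  have hz : ‖Complex.I * (x : ℂ)‖ ≤ 1 := by
    simpa using hx
  have hb := Complex.exp_bound hz (by norm_num : 0 < 3)
  have hsum : ∑ i ∈ Finset.range 3, (Complex.I * (x : ℂ)) ^ i / (Nat.factorial i) =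
      1 + Complex.I * (x : ℂ) - (x : ℂ) ^ 2 / 2 := by
    simp [Finset.sum_range_succ, Nat.factorial]
    ring_nf
    rw [Complex.I_sq]
    ring
  rw [hsum] at hb
  have : Complex.exp (Complex.I * (x : ℂ)) - (1 + Complex.I * (x : ℂ) - (x : ℂ) ^ 2 / 2)
      = Complex.exp (Complex.I * (x : ℂ)) - 1 - Complex.I * (x : ℂ) + (x : ℂ) ^ 2 / 2 := by
    ring
  rw [this] at hb
  refine hb.trans ?_
  have h2 : ‖Complex.I * (x : ℂ)‖ = |x| := by simp
  rw [h2]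
  norm_num [Nat.factorial] at hb ⊢
  nlinarith [abs_nonneg x, pow_nonneg (abs_nonneg x) 3]

lemma clt_exp_bound_quad (x : ℝ) :
    ‖Complex.exp (Complex.I * (x : ℂ)) - 1 - Complex.I * (x : ℂ) + (x : ℂ) ^ 2 / 2‖
      ≤ 4 * x ^ 2 := by
  rcases le_or_gt (|x|) 1 with hx | hx
  · refine (clt_exp_bound_cubic hx).trans ?_
    have : |x| ^ 3 ≤ |x| ^ 2 := by
      nlinarith [abs_nonneg x]
    calc |x| ^ 3 ≤ |x| ^ 2 := this
      _ = x ^ 2 := sq_abs x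
      _ ≤ 4 * x ^ 2 := by nlinarith
  · have h1 : ‖Complex.exp (Complex.I * (x : ℂ)) - 1‖ ≤ 2 := by
      calc ‖Complex.exp (Complex.I * (x : ℂ)) - 1‖
          ≤ ‖Complex.exp (Complex.I * (x : ℂ))‖ + ‖(1:ℂ)‖ := norm_sub_le _ _
        _ = 2 := by rw [clt_exp_norm]; norm_num
    have h2 : ‖Complex.I * (x : ℂ)‖ = |x| := by simp
    have h3 : ‖(x : ℂ) ^ 2 / 2‖ = x ^ 2 / 2 := by
      rw [norm_div]
      simp [← Complex.ofReal_pow, Complex.norm_real, _root_.abs_of_nonneg (sq_nonneg x)]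
    calc ‖Complex.exp (Complex.I * (x : ℂ)) - 1 - Complex.I * (x : ℂ) + (x : ℂ) ^ 2 / 2‖
        ≤ ‖Complex.exp (Complex.I * (x : ℂ)) - 1 - Complex.I * (x : ℂ)‖ + ‖(x : ℂ) ^ 2 / 2‖ :=
          norm_add_le _ _
      _ ≤ ‖Complex.exp (Complex.I * (x : ℂ)) - 1‖ + ‖Complex.I * (x : ℂ)‖ + ‖(x : ℂ) ^ 2 / 2‖ := by
          gcongr; exact norm_sub_le _ _
      _ ≤ 2 + |x| + x ^ 2 / 2 := by rw [h2, h3]; gcongr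
      _ ≤ 4 * x ^ 2 := by nlinarith [_root_.sq_abs x, abs_nonneg x]

lemma clt_exp_integrable {Ω : Type*} [MeasurableSpace Ω] (P : Measure Ω) [IsProbabilityMeasure P]
    {W : Ω → ℝ} (hm : Measurable W) :
    Integrable (fun ω => Complex.exp (Complex.I * ((W ω : ℝ) : ℂ))) P := by
  refine (integrable_const (1 : ℝ)).mono' ?_ ?_
  · exact (Complex.measurable_exp.comp
      ((Complex.measurable_ofReal.comp hm).const_mul Complex.I)).aestronglyMeasurable
  · refine Eventually.of_forall fun ω => ?_
    rw [clt_exp_norm]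

lemma clt_sqrt_atTop : Filter.Tendsto (fun N : ℕ => Real.sqrt N) atTop atTop := by
  have h : Tendsto Real.sqrt atTop atTop := by
    refine tendsto_atTop_atTop_of_monotone (fun a b hab => Real.sqrt_le_sqrt hab) ?_
    intro b
    exact ⟨b ^ 2, by rw [Real.sqrt_sq_eq_abs]; exact le_abs_self b⟩
  exact h.comp tendsto_natCast_atTop_atTop

lemma clt_aux_taylor {Ω : Type*} [MeasurableSpace Ω] (P : Measure Ω) [IsProbabilityMeasure P]
    {Z : Ω → ℝ} (hm : Measurable Z) (hL2 : MemLp Z 2 P) (hmean : ∫ ω, Z ω ∂P = 0)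
    {σ : ℝ} (hσ : 0 < σ) (hvar : ∫ ω, Z ω ^ 2 ∂P = σ ^ 2) (t : ℝ) :
    Tendsto (fun N : ℕ => (N : ℂ) *
        ((∫ ω, Complex.exp (Complex.I * ((t / (σ * Real.sqrt N) * Z ω : ℝ) : ℂ)) ∂P) - 1))
      atTop (nhds (-(t : ℂ) ^ 2 / 2)) := by
  set s : ℕ → ℝ := fun N => t / (σ * Real.sqrt N) with hs
  have hZ1 : Integrable Z P := hL2.integrable one_le_two
  have hZ2 : Integrable (fun ω => Z ω ^ 2) P := hL2.integrable_sq
  have hIe : ∀ N, Integrable (fun ω => Complex.exp (Complex.I * ((s N * Z ω : ℝ) : ℂ))) P :=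
    fun N => clt_exp_integrable P (measurable_const.mul hm)
  set g : ℕ → Ω → ℂ := fun N ω => (N : ℂ) *
      (Complex.exp (Complex.I * ((s N * Z ω : ℝ) : ℂ)) - 1 - Complex.I * ((s N * Z ω : ℝ) : ℂ)
        + ((s N * Z ω : ℝ) : ℂ) ^ 2 / 2) with hgdef
  have hI2 : ∀ N, Integrable (fun ω => Complex.I * ((s N * Z ω : ℝ) : ℂ)) P :=
    fun N => ((hZ1.const_mul (s N)).ofReal).const_mul Complex.I
  have hI3 : ∀ N, Integrable (fun ω => ((s N * Z ω : ℝ) : ℂ) ^ 2 / 2) P := by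
    intro N
    have h2 : Integrable (fun ω => (s N * Z ω) ^ 2) P := by
      have h3 := hZ2.const_mul ((s N) ^ 2)
      apply h3.congr
      exact Eventually.of_forall fun ω => by ring
    simpa [div_eq_mul_inv] using (h2.ofReal).mul_const ((2 : ℂ))⁻¹
  have hIg : ∀ N, Integrable (g N) P := fun N =>
    ((((hIe N).sub (integrable_const 1)).sub (hI2 N)).add (hI3 N)).const_mul _
  have hNs : ∀ N : ℕ, 1 ≤ N → (N : ℝ) * (s N) ^ 2 = t ^ 2 / σ ^ 2 := by
    intro N hN
    have hNpos : (0 : ℝ) < N := by exact_mod_cast hN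
    have hsq : Real.sqrt N ^ 2 = (N : ℝ) := Real.sq_sqrt hNpos.le
    have hsqrtpos : (0 : ℝ) < Real.sqrt N := Real.sqrt_pos.mpr hNpos
    have hsN : s N ^ 2 = t ^ 2 / (σ ^ 2 * N) := by
      rw [show s N = t / (σ * Real.sqrt N) from rfl, div_pow, mul_pow, hsq]
    rw [hsN]
    field_simp
  -- key identity
  have hkey : ∀ N : ℕ, 1 ≤ N →
      (N : ℂ) * ((∫ ω, Complex.exp (Complex.I * ((s N * Z ω : ℝ) : ℂ)) ∂P) - 1)
        = (∫ ω, g N ω ∂P) - (t : ℂ) ^ 2 / 2 := by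
    intro N hN
    have e2 : ∫ ω, Complex.I * ((s N * Z ω : ℝ) : ℂ) ∂P = 0 := by
      rw [integral_const_mul]
      rw [show ∫ ω, ((s N * Z ω : ℝ) : ℂ) ∂P = ((∫ ω, s N * Z ω ∂P : ℝ) : ℂ) from integral_ofReal]
      rw [integral_const_mul, hmean]
      simp
    have e3 : ∫ ω, ((s N * Z ω : ℝ) : ℂ) ^ 2 / 2 ∂P
        = ((s N : ℝ) : ℂ) ^ 2 * ((σ : ℝ) : ℂ) ^ 2 / 2 := by
      have hcast : (fun ω => ((s N * Z ω : ℝ) : ℂ) ^ 2 / 2)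
          = fun ω => ((s N : ℝ) : ℂ) ^ 2 / 2 * ((Z ω ^ 2 : ℝ) : ℂ) := by
        funext ω; push_cast; ring
      rw [hcast, integral_const_mul]
      rw [show ∫ ω, ((Z ω ^ 2 : ℝ) : ℂ) ∂P = ((∫ ω, Z ω ^ 2 ∂P : ℝ) : ℂ) from integral_ofReal,
        hvar]
      push_cast
      ring
    have hsplit : ∫ ω, (Complex.exp (Complex.I * ((s N * Z ω : ℝ) : ℂ)) - 1
          - Complex.I * ((s N * Z ω : ℝ) : ℂ) + ((s N * Z ω : ℝ) : ℂ) ^ 2 / 2) ∂P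
        = (∫ ω, Complex.exp (Complex.I * ((s N * Z ω : ℝ) : ℂ)) ∂P) - 1
          + ((s N : ℝ) : ℂ) ^ 2 * ((σ : ℝ) : ℂ) ^ 2 / 2 := by
      have iA : Integrable (fun ω => Complex.exp (Complex.I * ((s N * Z ω : ℝ) : ℂ)) - 1) P :=
        (hIe N).sub (integrable_const 1)
      have iB : Integrable (fun ω => Complex.exp (Complex.I * ((s N * Z ω : ℝ) : ℂ)) - 1
          - Complex.I * ((s N * Z ω : ℝ) : ℂ)) P := iA.sub (hI2 N)
      rw [integral_add iB (hI3 N), integral_sub iA (hI2 N),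
        integral_sub (hIe N) (integrable_const 1), integral_const, e2, e3]
      simp
    have hgint : ∫ ω, g N ω ∂P = (N : ℂ) *
        ((∫ ω, Complex.exp (Complex.I * ((s N * Z ω : ℝ) : ℂ)) ∂P) - 1
          + ((s N : ℝ) : ℂ) ^ 2 * ((σ : ℝ) : ℂ) ^ 2 / 2) := by
      simp only [hgdef]
      rw [integral_const_mul, hsplit]
    have hNsC : (N : ℂ) * ((s N : ℝ) : ℂ) ^ 2 = (t : ℂ) ^ 2 / ((σ : ℝ) : ℂ) ^ 2 := by
      have hr := hNs N hN
      have hc := congrArg (fun r : ℝ => (r : ℂ)) hr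
      push_cast at hc
      exact hc
    have hσC : ((σ : ℝ) : ℂ) ≠ 0 := by exact_mod_cast hσ.ne'
    rw [hgint]
    have h4 : (N : ℂ) * (((s N : ℝ) : ℂ) ^ 2 * ((σ : ℝ) : ℂ) ^ 2 / 2) = (t : ℂ) ^ 2 / 2 := by
      rw [show (N : ℂ) * (((s N : ℝ) : ℂ) ^ 2 * ((σ : ℝ) : ℂ) ^ 2 / 2)
          = ((N : ℂ) * ((s N : ℝ) : ℂ) ^ 2) * ((σ : ℝ) : ℂ) ^ 2 / 2 from by ring, hNsC]
      field_simp
    linear_combination -h4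
  -- dominated convergence for g
  have hNsle : ∀ N : ℕ, (N : ℝ) * (s N) ^ 2 ≤ (t / σ) ^ 2 := by
    intro N
    rcases Nat.eq_zero_or_pos N with h0 | h1
    · subst h0; simp [sq_nonneg]
    · rw [hNs N h1, div_pow]
  have hgto : Tendsto (fun N => ∫ ω, g N ω ∂P) atTop (nhds 0) := by
    have h0 : (0 : ℂ) = ∫ (_ : Ω), (0 : ℂ) ∂P := by simp
    rw [h0]
    apply tendsto_integral_of_dominated_convergence
      (bound := fun ω => 4 * (t / σ) ^ 2 * Z ω ^ 2)
    · exact fun N => (hIg N).1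
    · exact (hZ2.const_mul _)
    · intro N
      refine Eventually.of_forall fun ω => ?_
      have hb := clt_exp_bound_quad (s N * Z ω)
      have hnorm : ‖g N ω‖ = (N : ℝ) *
          ‖Complex.exp (Complex.I * ((s N * Z ω : ℝ) : ℂ)) - 1
            - Complex.I * ((s N * Z ω : ℝ) : ℂ) + ((s N * Z ω : ℝ) : ℂ) ^ 2 / 2‖ := by
        rw [hgdef]
        simp [norm_mul]
      rw [hnorm]
      have hmul : (N : ℝ) * (4 * (s N * Z ω) ^ 2) = 4 * ((N : ℝ) * (s N) ^ 2) * Z ω ^ 2 := by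
        ring
      calc (N : ℝ) * ‖_‖ ≤ (N : ℝ) * (4 * (s N * Z ω) ^ 2) := by
            exact mul_le_mul_of_nonneg_left hb (Nat.cast_nonneg N)
        _ = 4 * ((N : ℝ) * (s N) ^ 2) * Z ω ^ 2 := hmul
        _ ≤ 4 * (t / σ) ^ 2 * Z ω ^ 2 := by
            have := hNsle N
            nlinarith [sq_nonneg (Z ω)]
    · refine Eventually.of_forall fun ω => ?_
      have hsto : Tendsto s atTop (nhds 0) := by
        apply Filter.Tendsto.div_atTop (tendsto_const_nhds)
        exact Tendsto.const_mul_atTop hσ clt_sqrt_atTop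
      have hxev : ∀ᶠ N : ℕ in atTop, |s N * Z ω| ≤ 1 := by
        have h1 := (hsto.mul_const (Z ω)).abs
        rw [zero_mul, abs_zero] at h1
        exact (h1.eventually_lt_const (by norm_num : (0:ℝ) < 1)).mono fun N hN => hN.le
      have hb2 : Tendsto (fun N : ℕ => |t / σ| ^ 3 * |Z ω| ^ 3 * (Real.sqrt N)⁻¹)
          atTop (nhds 0) := by
        have hinv : Tendsto (fun N : ℕ => (Real.sqrt N)⁻¹) atTop (nhds 0) :=
          clt_sqrt_atTop.inv_tendsto_atTop
        have h5 := hinv.const_mul (|t / σ| ^ 3 * |Z ω| ^ 3)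
        rw [mul_zero] at h5
        exact h5.congr fun N => by ring
      refine squeeze_zero_norm' ?_ hb2
      · filter_upwards [hxev, eventually_ge_atTop 1] with N hx hN
        have hNpos : (0 : ℝ) < N := by exact_mod_cast hN
        have hsq : Real.sqrt N ^ 2 = (N : ℝ) := Real.sq_sqrt hNpos.le
        have hsqrtpos : (0 : ℝ) < Real.sqrt N := Real.sqrt_pos.mpr hNpos
        have hb := clt_exp_bound_cubic hx
        have hnorm : ‖g N ω‖ = (N : ℝ) *
            ‖Complex.exp (Complex.I * ((s N * Z ω : ℝ) : ℂ)) - 1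
              - Complex.I * ((s N * Z ω : ℝ) : ℂ) + ((s N * Z ω : ℝ) : ℂ) ^ 2 / 2‖ := by
          rw [hgdef]; simp [norm_mul]
        rw [hnorm]
        have habs : |s N| = |t| / (σ * Real.sqrt N) := by
          rw [hs]
          rw [abs_div, abs_of_pos (mul_pos hσ hsqrtpos)]
        have h3 : Real.sqrt N ^ 3 = (N : ℝ) * Real.sqrt N := by
          rw [pow_succ, hsq]
        have hc : (N : ℝ) * |s N| ^ 3 = |t / σ| ^ 3 * (Real.sqrt N)⁻¹ := by
          rw [habs, abs_div, _root_.abs_of_pos hσ, div_pow, div_pow, mul_pow, h3]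
          field_simp
        calc (N : ℝ) * ‖_‖ ≤ (N : ℝ) * |s N * Z ω| ^ 3 :=
              mul_le_mul_of_nonneg_left hb (Nat.cast_nonneg N)
          _ = (N : ℝ) * |s N| ^ 3 * |Z ω| ^ 3 := by rw [abs_mul]; ring
          _ = |t / σ| ^ 3 * |Z ω| ^ 3 * (Real.sqrt N)⁻¹ := by rw [hc]; ring
  -- conclude
  have hfinal := hgto.sub_const ((t : ℂ) ^ 2 / 2)
  rw [zero_sub] at hfinal
  have hneg : -((t : ℂ) ^ 2 / 2) = -(t : ℂ) ^ 2 / 2 := by ring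
  rw [hneg] at hfinal
  apply hfinal.congr'
  filter_upwards [eventually_ge_atTop 1] with N hN
  exact (hkey N hN).symm

lemma clt_aux_pow_exp {c : ℕ → ℂ} {z : ℂ}
    (h : Tendsto (fun N : ℕ => (N : ℂ) * (c N - 1)) atTop (nhds z)) :
    Tendsto (fun N : ℕ => (c N) ^ N) atTop (nhds (Complex.exp z)) := by
  have hc1 : Tendsto (fun N : ℕ => c N - 1) atTop (nhds 0) := by
    have hinv : Tendsto (fun N : ℕ => ((N : ℂ))⁻¹) atTop (nhds 0) := by
      simpa using (tendsto_natCast_atTop_atTop (R := ℝ)).inv_tendsto_atTop.ofReal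
    have h2 := h.mul hinv
    rw [mul_zero] at h2
    apply h2.congr'
    filter_upwards [eventually_ge_atTop 1] with N hN
    have hN0 : (N : ℂ) ≠ 0 := by exact_mod_cast Nat.one_le_iff_ne_zero.mp hN
    field_simp
  set G : ℂ → ℂ := fun w => if w = 0 then 1 else Complex.log (1 + w) / w with hGdef
  have hGcont : Tendsto G (nhds 0) (nhds 1) := by
    have hd : HasDerivAt (fun w : ℂ => Complex.log (1 + w)) 1 0 := by
      have h0 : HasDerivAt (fun w : ℂ => Complex.log (1 + w)) ((1 + 0 : ℂ))⁻¹ 0 := by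
        have hcomp := (Complex.hasDerivAt_log
          (by norm_num [Complex.mem_slitPlane_iff] : (1 + 0 : ℂ) ∈ Complex.slitPlane)).comp
          (0 : ℂ) ((hasDerivAt_id (0 : ℂ)).const_add 1)
        simpa [Function.comp_def] using hcomp
      simpa using h0
    have hslope : Tendsto (slope (fun w : ℂ => Complex.log (1 + w)) 0) (nhdsWithin 0 {(0:ℂ)}ᶜ)
        (nhds 1) := hasDerivAt_iff_tendsto_slope.mp hd
    have h1 : Tendsto G (nhdsWithin 0 {(0:ℂ)}ᶜ) (nhds 1) := by
      apply hslope.congr'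
      filter_upwards [self_mem_nhdsWithin] with w hw
      have hw0 : w ≠ 0 := hw
      simp [slope, hGdef, hw0, Complex.log_one, div_eq_inv_mul]
    rw [← nhdsNE_sup_pure (0 : ℂ)]
    rw [tendsto_sup]
    refine ⟨h1, ?_⟩
    have : G 0 = 1 := by simp [hGdef]
    simpa [this] using tendsto_pure_nhds G (0 : ℂ)
  have hlog : ∀ N, Complex.log (c N) = (c N - 1) * G (c N - 1) := by
    intro N
    by_cases hcN : c N = 1
    · simp [hcN, Complex.log_one]
    · have hne : c N - 1 ≠ 0 := sub_ne_zero.mpr hcN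
      simp only [hGdef, if_neg hne]
      rw [mul_div_cancel₀ _ hne]
      norm_num
  have hNlog : Tendsto (fun N : ℕ => (N : ℂ) * Complex.log (c N)) atTop (nhds z) := by
    have := h.mul (hGcont.comp hc1)
    rw [mul_one] at this
    apply this.congr
    intro N
    simp only [Function.comp_apply, hlog N]
    ring
  have hexp := (Complex.continuous_exp.tendsto z).comp hNlog
  apply hexp.congr'
  have hne : ∀ᶠ N : ℕ in atTop, c N ≠ 0 := by
    have hnrm := hc1.norm
    rw [norm_zero] at hnrm
    have hev := hnrm.eventually_lt_const (by norm_num : (0:ℝ) < 1/2)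
    filter_upwards [hev] with N hN
    intro h0
    rw [h0] at hN
    norm_num at hN
  filter_upwards [hne] with N hN
  simp only [Function.comp_apply]
  conv_rhs => rw [← Complex.exp_log hN]
  rw [← Complex.exp_nat_mul]

lemma clt_aux_prod {Ω : Type*} [MeasurableSpace Ω] {P : Measure Ω} [IsProbabilityMeasure P]
    {X : ℕ → Ω → ℝ} (hmeas : ∀ k, Measurable (X k))
    (hindep : ProbabilityTheory.iIndepFun X P)
    (hident : ∀ k, Measure.map (X k) P = Measure.map (X 0) P)
    (e : ℝ → ℂ) (he : Measurable e) (hb : ∀ x, ‖e x‖ = 1) :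
    ∀ N : ℕ, ∫ ω, ∏ k ∈ Finset.range N, e (X k ω) ∂P = (∫ ω, e (X 0 ω) ∂P) ^ N := by
  intro N
  induction N with
  | zero => simp
  | succ n ih =>
    have hInt : ∀ (W : Ω → ℝ), Measurable W → Integrable (fun ω => e (W ω)) P := fun W hW =>
      (integrable_const (1 : ℝ)).mono' ((he.comp hW).aestronglyMeasurable)
        (Eventually.of_forall fun ω => (hb _).le)
    have hprodInt : Integrable (fun ω => ∏ k ∈ Finset.range n, e (X k ω)) P := by
      refine (integrable_const (1 : ℝ)).mono'
        ((Finset.measurable_prod _ (fun k _ => he.comp (hmeas k))).aestronglyMeasurable) ?_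
      refine Eventually.of_forall fun ω => ?_
      rw [norm_prod]
      simp [hb]
    have hci : ProbabilityTheory.iIndepFun (fun k => e ∘ X k) P :=
      hindep.comp (fun _ => e) (fun _ => he)
    have hip := hci.indepFun_prod_range_succ (fun k => he.comp (hmeas k)) n
    have heq : (fun ω => ∏ k ∈ Finset.range n, e (X k ω))
        = (∏ j ∈ Finset.range n, (e ∘ X j)) := by
      funext ω
      rw [Finset.prod_apply]
      rfl
    calc ∫ ω, ∏ k ∈ Finset.range (n + 1), e (X k ω) ∂P
        = ∫ ω, (∏ k ∈ Finset.range n, e (X k ω)) * e (X n ω) ∂P := by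
          simp [Finset.prod_range_succ]
      _ = (∫ ω, ∏ k ∈ Finset.range n, e (X k ω) ∂P) * ∫ ω, e (X n ω) ∂P := by
          refine clt_aux_integral_mul ?_ hprodInt (hInt _ (hmeas n))
          rw [heq]
          exact hip
      _ = (∫ ω, e (X 0 ω) ∂P) ^ n * ∫ ω, e (X 0 ω) ∂P := by
          rw [ih]
          congr 1
          rw [← integral_map (hmeas n).aemeasurable he.aestronglyMeasurable, hident n,
            integral_map (hmeas 0).aemeasurable he.aestronglyMeasurable]
      _ = (∫ ω, e (X 0 ω) ∂P) ^ (n + 1) := by rw [pow_succ]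

end CLTAux

/-- Central limit theorem for i.i.d. real random variables with mean `x̄` and finite
variance `σ² > 0`: the characteristic functions of the standardized sums
`Y_N = ∑_{k<N} (X_k - x̄)/(σ√N)` converge pointwise to `e^{-t²/2}`, i.e. `Y_N`
converges weakly to a standard normal random variable. -/
theorem clt_characteristic_functions
    {Ω : Type*} [MeasurableSpace Ω] (P : Measure Ω) [IsProbabilityMeasure P]
    (X : ℕ → Ω → ℝ) (hmeas : ∀ k, Measurable (X k))
    (hindep : ProbabilityTheory.iIndepFun X P)
    (hident : ∀ k, Measure.map (X k) P = Measure.map (X 0) P)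
    (hL2 : MemLp (X 0) 2 P)
    (xbar σ : ℝ) (hσ : 0 < σ)
    (hmean : ∫ ω, X 0 ω ∂P = xbar)
    (hvar : ∫ ω, (X 0 ω - xbar) ^ 2 ∂P = σ ^ 2) :
    ∀ t : ℝ,
      Tendsto
        (fun (N : ℕ) => ∫ ω, Complex.exp (Complex.I * t *
            ((∑ k ∈ Finset.range N, (X k ω - xbar)) / (σ * Real.sqrt N))) ∂P)
        atTop (nhds (Complex.exp (-(t : ℂ) ^ 2 / 2))) := by
  intro t
  set s : ℕ → ℝ := fun N => t / (σ * Real.sqrt N) with hs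
  set Z : Ω → ℝ := fun ω => X 0 ω - xbar with hZ
  set c : ℕ → ℂ := fun N => ∫ ω, Complex.exp (Complex.I * ((s N * Z ω : ℝ) : ℂ)) ∂P with hc
  -- Step 1: rewrite integrals as powers of the characteristic function
  have hkey : ∀ N : ℕ,
      (∫ ω, Complex.exp (Complex.I * t *
          ((∑ k ∈ Finset.range N, (X k ω - xbar)) / (σ * Real.sqrt N))) ∂P) = c N ^ N := by
    intro N
    have hprod := clt_aux_prod hmeas hindep hident
      (fun x => Complex.exp (Complex.I * ((s N * (x - xbar) : ℝ) : ℂ)))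
      (by
        apply Complex.measurable_exp.comp
        exact (Complex.measurable_ofReal.comp
          (measurable_const.mul (measurable_id.sub measurable_const))).const_mul Complex.I)
      (fun x => clt_exp_norm _) N
    have hint_eq : ∀ ω, Complex.exp (Complex.I * t *
        ((∑ k ∈ Finset.range N, (X k ω - xbar)) / (σ * Real.sqrt N)))
        = ∏ k ∈ Finset.range N, Complex.exp (Complex.I * ((s N * (X k ω - xbar) : ℝ) : ℂ)) := by
      intro ω
      rw [← Complex.exp_sum]
      congr 1
      have h1 : (∑ k ∈ Finset.range N, Complex.I * ((s N * (X k ω - xbar) : ℝ) : ℂ))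
          = Complex.I * ((s N : ℝ) : ℂ)
            * ((∑ k ∈ Finset.range N, (X k ω - xbar) : ℝ) : ℂ) := by
        push_cast
        rw [Finset.mul_sum]
        exact Finset.sum_congr rfl fun k _ => by ring
      rw [h1]
      have h2 : ((s N : ℝ) : ℂ) = (t : ℂ) / ((σ : ℂ) * (Real.sqrt N : ℂ)) := by
        rw [hs]
        push_cast
        ring
      rw [h2]
      ring
    calc (∫ ω, Complex.exp (Complex.I * t *
            ((∑ k ∈ Finset.range N, (X k ω - xbar)) / (σ * Real.sqrt N))) ∂P)
        = ∫ ω, ∏ k ∈ Finset.range N,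
            Complex.exp (Complex.I * ((s N * (X k ω - xbar) : ℝ) : ℂ)) ∂P := by
          exact integral_congr_ae (Eventually.of_forall hint_eq)
      _ = (∫ ω, Complex.exp (Complex.I * ((s N * (X 0 ω - xbar) : ℝ) : ℂ)) ∂P) ^ N := hprod
      _ = c N ^ N := rfl
  -- Step 2: the Taylor expansion limit
  have hZmeas : Measurable Z := (hmeas 0).sub measurable_const
  have hZL2 : MemLp Z 2 P := hL2.sub (memLp_const xbar)
  have hZmean : ∫ ω, Z ω ∂P = 0 := by
    rw [hZ]
    rw [integral_sub (hL2.integrable one_le_two) (integrable_const xbar), hmean, integral_const]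
    simp
  have htaylor := clt_aux_taylor P hZmeas hZL2 hZmean hσ hvar t
  have hpow := clt_aux_pow_exp (c := c) htaylor
  apply hpow.congr
  intro N
  exact (hkey N).symm
end

section
/- For a probability measure μ on ℝ^n that is absolutely continuous with respect to Lebesgue measure with bounded continuous density of compact support, the information dimension lim_{ε→0} H(Z^ε)/(-log ε) equals n, where H(Z^ε) is the Shannon entropy of the coarse-graining of μ over the uniform partition of ℝ^n into cubes of side ε. -/
open MeasureTheory Filter

/-- The cube of side `ε` indexed by `k ∈ ℤⁿ` in the uniform partition of `ℝⁿ`. -/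
def unifCube (n : ℕ) (ε : ℝ) (k : Fin n → ℤ) : Set (Fin n → ℝ) :=
  Set.univ.pi fun i => Set.Ico ((k i : ℝ) * ε) (((k i : ℝ) + 1) * ε)

/-- Shannon entropy of the coarse-graining of `μ` over the uniform partition of `ℝⁿ`
into cubes of side `ε`. -/
noncomputable def cubeEntropy (n : ℕ) (μ : Measure (Fin n → ℝ)) (ε : ℝ) : ℝ :=
  ∑' k : Fin n → ℤ, Real.negMulLog ((μ (unifCube n ε k)).toReal)

/-! ### Auxiliary lemmas -/

lemma aux_sum_negMulLog_le_log_card {α : Type*} (s : Finset α) (p : α → ℝ)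
    (h0 : ∀ a ∈ s, 0 ≤ p a) (h1 : ∑ a ∈ s, p a = 1) :
    ∑ a ∈ s, Real.negMulLog (p a) ≤ Real.log s.card := by
  have hs : s.Nonempty := by
    rcases s.eq_empty_or_nonempty with h | h
    · simp [h] at h1
    · exact h
  have hN : (0:ℝ) < s.card := by exact_mod_cast hs.card_pos
  have key : ∀ a ∈ s, Real.negMulLog (p a) ≤
      p a * Real.log s.card + (s.card : ℝ)⁻¹ - p a := by
    intro a ha
    rcases eq_or_lt_of_le (h0 a ha) with h | h
    · rw [← h]
      simp only [Real.negMulLog_zero, zero_mul, zero_add, sub_zero]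
      positivity
    · have hlog : Real.log ((p a * s.card)⁻¹) ≤ (p a * s.card)⁻¹ - 1 :=
        Real.log_le_sub_one_of_pos (by positivity)
      rw [Real.log_inv, Real.log_mul (ne_of_gt h) (ne_of_gt hN)] at hlog
      have h2 : -Real.log (p a) ≤ Real.log s.card + (p a * s.card)⁻¹ - 1 := by linarith
      have h3 : p a * (-Real.log (p a)) ≤ p a * (Real.log s.card + (p a * s.card)⁻¹ - 1) :=
        mul_le_mul_of_nonneg_left h2 h.le
      have h4 : p a * (Real.log s.card + (p a * s.card)⁻¹ - 1)
          = p a * Real.log s.card + (s.card : ℝ)⁻¹ - p a := by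
        field_simp
      rw [Real.negMulLog]
      nlinarith [h3, h4]
  calc ∑ a ∈ s, Real.negMulLog (p a)
      ≤ ∑ a ∈ s, (p a * Real.log s.card + (s.card : ℝ)⁻¹ - p a) :=
        Finset.sum_le_sum key
    _ = Real.log s.card := by
        rw [Finset.sum_sub_distrib, Finset.sum_add_distrib, ← Finset.sum_mul, h1,
          Finset.sum_const, one_mul, nsmul_eq_mul, mul_inv_cancel₀ (ne_of_gt hN)]
        ring

lemma aux_mem_unifCube_iff {n : ℕ} {ε : ℝ} (hε : 0 < ε) {x : Fin n → ℝ} {k : Fin n → ℤ} :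
    x ∈ unifCube n ε k ↔ ∀ i, k i = ⌊x i / ε⌋ := by
  simp only [unifCube, Set.mem_pi, Set.mem_univ, forall_true_left, Set.mem_Ico]
  refine forall_congr' fun i => ?_
  rw [eq_comm, Int.floor_eq_iff, le_div_iff₀ hε, div_lt_iff₀ hε]

lemma aux_measurableSet_unifCube {n : ℕ} {ε : ℝ} {k : Fin n → ℤ} :
    MeasurableSet (unifCube n ε k) :=
  MeasurableSet.univ_pi fun _ => measurableSet_Ico

lemma aux_tsum_measure_unifCube {n : ℕ} {ε : ℝ} (hε : 0 < ε) (μ : Measure (Fin n → ℝ)) :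
    ∑' k : Fin n → ℤ, μ (unifCube n ε k) = μ Set.univ := by
  rw [← measure_iUnion ?_ fun _ => aux_measurableSet_unifCube]
  · congr 1
    ext x
    simp only [Set.mem_iUnion, Set.mem_univ, iff_true]
    exact ⟨fun i => ⌊x i / ε⌋, (aux_mem_unifCube_iff hε).mpr fun i => rfl⟩
  · intro k k' hkk'
    rw [Function.onFun, Set.disjoint_left]
    intro x hx hx'
    exact hkk' (funext fun i =>
      ((aux_mem_unifCube_iff hε).mp hx i).trans ((aux_mem_unifCube_iff hε).mp hx' i).symm)

lemma aux_volume_unifCube {n : ℕ} {ε : ℝ} (hε : 0 < ε) (k : Fin n → ℤ) :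
    volume (unifCube n ε k) = ENNReal.ofReal (ε ^ n) := by
  rw [unifCube, volume_pi_pi]
  have : ∀ i : Fin n, volume (Set.Ico ((k i : ℝ) * ε) (((k i : ℝ) + 1) * ε))
      = ENNReal.ofReal ε := by
    intro i
    rw [Real.volume_Ico]
    congr 1
    ring
  simp only [this, Finset.prod_const, Finset.card_univ, Fintype.card_fin]
  rw [← ENNReal.ofReal_pow hε.le]

lemma aux_measure_unifCube_le {n : ℕ} (q : (Fin n → ℝ) → ℝ) (C ε : ℝ) (hC : ∀ x, q x ≤ C)
    (hC0 : 0 ≤ C) (hε : 0 < ε) (k : Fin n → ℤ) :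
    (volume.withDensity fun x => ENNReal.ofReal (q x)) (unifCube n ε k)
      ≤ ENNReal.ofReal (C * ε ^ n) := by
  rw [withDensity_apply _ aux_measurableSet_unifCube]
  calc ∫⁻ x in unifCube n ε k, ENNReal.ofReal (q x)
      ≤ ∫⁻ _ in unifCube n ε k, ENNReal.ofReal C :=
        lintegral_mono fun x => ENNReal.ofReal_le_ofReal (hC x)
    _ = ENNReal.ofReal C * volume (unifCube n ε k) := setLIntegral_const _ _
    _ = ENNReal.ofReal (C * ε ^ n) := by
        rw [aux_volume_unifCube hε, ← ENNReal.ofReal_mul hC0]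

lemma aux_exists_of_measure_ne_zero {n : ℕ} (q : (Fin n → ℝ) → ℝ) (ε : ℝ) (k : Fin n → ℤ)
    (h : (volume.withDensity fun x => ENNReal.ofReal (q x)) (unifCube n ε k) ≠ 0) :
    ∃ x ∈ unifCube n ε k, q x ≠ 0 := by
  by_contra hcon
  push_neg at hcon
  apply h
  rw [withDensity_apply _ aux_measurableSet_unifCube,
    setLIntegral_congr_fun aux_measurableSet_unifCube
      (fun x hx => by rw [hcon x hx, ENNReal.ofReal_zero])]
  simp

/-- A probability measure on `ℝⁿ` with a bounded continuous compactly supported density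
(of finite differential entropy) has information dimension `n`. -/
theorem informationDimension_of_absolutely_continuous
    (n : ℕ) (q : (Fin n → ℝ) → ℝ) (hqcont : Continuous q) (hq0 : ∀ x, 0 ≤ q x)
    (hqbdd : ∃ C, ∀ x, q x ≤ C) (hqsupp : HasCompactSupport q)
    (μ : Measure (Fin n → ℝ))
    (hμ : μ = volume.withDensity fun x => ENNReal.ofReal (q x))
    [IsProbabilityMeasure μ]
    (hfin : Integrable (fun x => q x * Real.log (q x)) volume) :
    Tendsto (fun ε => cubeEntropy n μ ε / (-Real.log ε))
      (nhdsWithin 0 (Set.Ioi 0)) (nhds n) := by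
  obtain ⟨C₀, hC₀⟩ := hqbdd
  set C : ℝ := max C₀ 1 with hCdef
  have hC1 : (1:ℝ) ≤ C := le_max_right _ _
  have hCpos : (0:ℝ) < C := lt_of_lt_of_le one_pos hC1
  have hC : ∀ x, q x ≤ C := fun x => (hC₀ x).trans (le_max_left _ _)
  obtain ⟨R₀, hR₀⟩ := hqsupp.isBounded.exists_norm_le
  set R : ℝ := max R₀ 0 with hRdef
  have hR0 : (0:ℝ) ≤ R := le_max_right _ _
  have hR : ∀ x ∈ tsupport q, ‖x‖ ≤ R := fun x hx => (hR₀ x hx).trans (le_max_left _ _)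
  -- the key two-sided bound on the entropy
  have key : ∀ ε ∈ Set.Ioo (0:ℝ) 1,
      (n : ℝ) * (-Real.log ε) + (-Real.log C) ≤ cubeEntropy n μ ε ∧
      cubeEntropy n μ ε ≤ (n : ℝ) * (-Real.log ε) + (n : ℝ) * Real.log (2*R+5) := by
    rintro ε ⟨hε, hε1⟩
    set K : ℤ := ⌈R/ε⌉ + 1 with hKdef
    have hceil0 : (0:ℤ) ≤ ⌈R/ε⌉ := Int.ceil_nonneg (by positivity)
    have hK1 : (1:ℤ) ≤ K := by omega
    have hKR : ((K : ℤ) : ℝ) = (⌈R/ε⌉ : ℝ) + 1 := by rw [hKdef]; push_cast; ring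
    set S : Finset (Fin n → ℤ) := Finset.Icc (fun _ => -K) (fun _ => K) with hSdef
    set p : (Fin n → ℤ) → ℝ := fun k => (μ (unifCube n ε k)).toReal with hpdef
    have hp0 : ∀ k, 0 ≤ p k := fun k => ENNReal.toReal_nonneg
    have hceilR : R/ε ≤ (⌈R/ε⌉ : ℝ) := Int.le_ceil _
    -- every cube of nonzero measure lies in S
    have hsub : ∀ k : Fin n → ℤ, μ (unifCube n ε k) ≠ 0 → k ∈ S := by
      intro k hk
      rw [hμ] at hk
      obtain ⟨x, hxQ, hxq⟩ := aux_exists_of_measure_ne_zero q ε k hk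
      have hxsupp : x ∈ tsupport q := subset_closure hxq
      have hxnorm : ‖x‖ ≤ R := hR x hxsupp
      rw [hSdef, Finset.mem_Icc]
      have hbnd : ∀ i, -K ≤ k i ∧ k i ≤ K := by
        intro i
        have hxi : |x i| ≤ R := by
          calc |x i| = ‖x i‖ := (Real.norm_eq_abs _).symm
            _ ≤ ‖x‖ := norm_le_pi_norm x i
            _ ≤ R := hxnorm
        rw [unifCube, Set.mem_pi] at hxQ
        obtain ⟨h1, h2⟩ := hxQ i (Set.mem_univ i)
        have habs := abs_le.mp hxi
        constructor
        · have hlt : ((-K : ℤ) : ℝ) < (k i : ℝ) + 1 := by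
            have h2' : -R / ε < (k i : ℝ) + 1 := by
              rw [div_lt_iff₀ hε]
              nlinarith [habs.1]
            have h3 : -(⌈R/ε⌉:ℝ) ≤ -R/ε := by
              rw [neg_div]
              linarith
            push_cast
            linarith [hKR]
          have : (-K : ℤ) < k i + 1 := by exact_mod_cast hlt
          omega
        · have hle : (k i : ℝ) ≤ ((K : ℤ) : ℝ) := by
            have h1' : (k i : ℝ) ≤ R / ε := by
              rw [le_div_iff₀ hε]
              nlinarith [habs.2]
            push_cast
            linarith [hKR]
          exact_mod_cast hle
      exact ⟨fun i => (hbnd i).1, fun i => (hbnd i).2⟩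
    have hzero : ∀ k ∉ S, μ (unifCube n ε k) = 0 :=
      fun k hk => not_ne_iff.mp fun h => hk (hsub k h)
    -- the total mass of cubes in S is 1
    have htsum_eq : ∑' k : Fin n → ℤ, μ (unifCube n ε k) = ∑ k ∈ S, μ (unifCube n ε k) :=
      tsum_eq_sum hzero
    have hsum1 : ∑ k ∈ S, p k = 1 := by
      have h1 : (∑ k ∈ S, μ (unifCube n ε k)).toReal = 1 := by
        rw [← htsum_eq, aux_tsum_measure_unifCube hε μ, measure_univ, ENNReal.toReal_one]
      rw [← h1, ENNReal.toReal_sum fun k _ => measure_ne_top μ _]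
    have hHeq : cubeEntropy n μ ε = ∑ k ∈ S, Real.negMulLog (p k) := by
      rw [cubeEntropy]
      exact tsum_eq_sum fun k hk => by rw [hzero k hk]; simp
    have hple : ∀ k, p k ≤ C * ε ^ n := by
      intro k
      have hb := aux_measure_unifCube_le q C ε hC hCpos.le hε k
      rw [← hμ] at hb
      exact ENNReal.toReal_le_of_le_ofReal (by positivity) hb
    constructor
    · -- lower bound
      have hlb : ∀ k ∈ S, p k * (-Real.log (C * ε ^ n)) ≤ Real.negMulLog (p k) := by
        intro k _
        rcases eq_or_lt_of_le (hp0 k) with h | h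
        · rw [← h]; simp
        · have hlog : Real.log (p k) ≤ Real.log (C * ε ^ n) := Real.log_le_log h (hple k)
          rw [Real.negMulLog]
          nlinarith
      calc (n : ℝ) * (-Real.log ε) + (-Real.log C)
          = 1 * (-Real.log (C * ε ^ n)) := by
            rw [Real.log_mul (ne_of_gt hCpos) (by positivity), Real.log_pow]
            push_cast
            ring
        _ = ∑ k ∈ S, p k * (-Real.log (C * ε ^ n)) := by
            rw [← Finset.sum_mul, hsum1]
        _ ≤ ∑ k ∈ S, Real.negMulLog (p k) := Finset.sum_le_sum hlb
        _ = cubeEntropy n μ ε := hHeq.symm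
    · -- upper bound
      have hcard : (S.card : ℝ) = (((2*K+1 : ℤ) : ℝ)) ^ n := by
        have hc : S.card = ((2*K+1).toNat) ^ n := by
          rw [hSdef, Pi.card_Icc]
          have hI : (Finset.Icc (-K) K).card = (2*K+1).toNat := by
            rw [Int.card_Icc]
            congr 1
            ring
          simp [hI]
        rw [hc, Nat.cast_pow]
        congr 1
        rw [← Int.cast_natCast, Int.toNat_of_nonneg (by omega : (0:ℤ) ≤ 2*K+1)]
      have h2K1pos : (0:ℝ) < ((2*K+1 : ℤ) : ℝ) := by
        exact_mod_cast (by omega : (0:ℤ) < 2*K+1)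
      have hcard_le : (S.card : ℝ) ≤ ((2*R+5)/ε) ^ n := by
        rw [hcard]
        apply pow_le_pow_left₀ h2K1pos.le
        have hceil1 : (⌈R/ε⌉ : ℝ) < R/ε + 1 := Int.ceil_lt_add_one _
        have hRe : R/ε * ε = R := div_mul_cancel₀ R (ne_of_gt hε)
        have hc2 : (⌈R/ε⌉ : ℝ) * ε ≤ R + ε := by nlinarith
        rw [le_div_iff₀ hε]
        push_cast
        rw [hKR]
        nlinarith [hc2, hε.le, hε1]
      have hScard_pos : (0:ℝ) < S.card := by
        rw [hcard]; positivity
      calc cubeEntropy n μ ε = ∑ k ∈ S, Real.negMulLog (p k) := hHeq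
        _ ≤ Real.log S.card := aux_sum_negMulLog_le_log_card S p (fun k _ => hp0 k) hsum1
        _ ≤ Real.log (((2*R+5)/ε) ^ n) := Real.log_le_log hScard_pos hcard_le
        _ = (n : ℝ) * (-Real.log ε) + (n : ℝ) * Real.log (2*R+5) := by
            rw [Real.log_pow, Real.log_div (by positivity) (ne_of_gt hε)]
            push_cast
            ring
  -- now the squeeze argument
  have hLtop : Tendsto (fun ε : ℝ => -Real.log ε) (nhdsWithin 0 (Set.Ioi 0)) atTop :=
    tendsto_neg_atBot_atTop.comp Real.tendsto_log_nhdsGT_zero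
  have hdiv : ∀ c : ℝ, Tendsto (fun ε => (n : ℝ) + c / (-Real.log ε))
      (nhdsWithin 0 (Set.Ioi 0)) (nhds n) := by
    intro c
    have h0 : Tendsto (fun ε : ℝ => c / (-Real.log ε)) (nhdsWithin 0 (Set.Ioi 0)) (nhds 0) :=
      Tendsto.div_atTop tendsto_const_nhds hLtop
    have h1 : Tendsto (fun ε : ℝ => (n : ℝ) + c / (-Real.log ε))
        (nhdsWithin 0 (Set.Ioi 0)) (nhds ((n : ℝ) + 0)) :=
      tendsto_const_nhds.add h0
    simpa using h1
  have hmem : Set.Ioo (0:ℝ) 1 ∈ nhdsWithin (0:ℝ) (Set.Ioi 0) :=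
    Ioo_mem_nhdsGT_of_mem (by norm_num : (0:ℝ) ∈ Set.Ico 0 1)
  refine tendsto_of_tendsto_of_tendsto_of_le_of_le' (hdiv (-Real.log C))
    (hdiv ((n : ℝ) * Real.log (2*R+5))) ?_ ?_
  · filter_upwards [hmem] with ε hε
    obtain ⟨h1, _⟩ := key ε hε
    have hL : (0:ℝ) < -Real.log ε := by
      have := Real.log_neg hε.1 hε.2
      linarith
    have hne : Real.log ε ≠ 0 := by linarith
    have e : (n:ℝ) + (-Real.log C) / (-Real.log ε)
        = ((n:ℝ) * (-Real.log ε) + (-Real.log C)) / (-Real.log ε) := by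
      field_simp
      ring
    rw [e]
    exact (div_le_div_iff_of_pos_right hL).mpr h1
  · filter_upwards [hmem] with ε hε
    obtain ⟨_, h2⟩ := key ε hε
    have hL : (0:ℝ) < -Real.log ε := by
      have := Real.log_neg hε.1 hε.2
      linarith
    have hne : Real.log ε ≠ 0 := by linarith
    have e : (n:ℝ) + ((n:ℝ) * Real.log (2*R+5)) / (-Real.log ε)
        = ((n:ℝ) * (-Real.log ε) + (n:ℝ) * Real.log (2*R+5)) / (-Real.log ε) := by
      field_simp
      ring
    rw [e]
    exact (div_le_div_iff_of_pos_right hL).mpr h2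
end
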